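/- Let M ≥ 2, let 𝒜 be a nonempty proper subset of ℤ_M² with limiting Cantor set X ⊆ 𝕋². Suppose a, b are coprime integers, not both zero, with max(|a|, |b|) > M. Then there is no p ∈ 𝕋² such that the line ℝ(a,b) + p is contained in X. -/

import Mathlib

lemma key_hit (M : ℕ) (hM : 2 ≤ M) (a b : ℤ) (hco : IsCoprime b a) (ha : (M:ℝ) < |(a:ℝ)|)
    (P₁ P₂ u₁ u₂ : ℝ) :
    ∃ t : ℝ, ∃ k₁ k₂ : ℤ,
      (t * a + P₁ - k₁) ∈ Set.Ioo u₁ (u₁ + 1/M) ∧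
      (t * b + P₂ - k₂) ∈ Set.Ioo u₂ (u₂ + 1/M) := by
  have hM0 : (0:ℝ) < M := by positivity
  have haR : ((a:ℝ)) ≠ 0 := by
    intro h; rw [h, abs_zero] at ha; linarith
  have hanat : (0:ℝ) < |(a:ℝ)| := by positivity
  obtain ⟨t₀, ht₀⟩ : ∃ t₀ : ℝ, t₀ = (u₁ + 1/(2*M) - P₁) / a := ⟨_, rfl⟩
  obtain ⟨s, hs⟩ : ∃ s : ℝ, s = t₀ * b + P₂ := ⟨_, rfl⟩
  obtain ⟨L, hL⟩ : ∃ L : ℝ, L = u₂ - s := ⟨_, rfl⟩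
  obtain ⟨N, hN⟩ : ∃ N : ℤ, N = ⌊L * |(a:ℝ)|⌋ + 1 := ⟨_, rfl⟩
  have hN1 : L < (N:ℝ) / |(a:ℝ)| := by
    rw [lt_div_iff₀ hanat]
    have := Int.lt_floor_add_one (L * |(a:ℝ)|)
    push_cast [hN]; linarith
  have hN2 : (N:ℝ) / |(a:ℝ)| < L + 1/M := by
    rw [div_lt_iff₀ hanat]
    have h1 := Int.floor_le (L * |(a:ℝ)|)
    have h2 : (1:ℝ) < |(a:ℝ)| / M := (one_lt_div hM0).mpr ha
    rw [lt_div_iff₀ hM0] at h2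
    have h3 : (L + 1/M) * |(a:ℝ)| = L * |(a:ℝ)| + |(a:ℝ)| / M := by ring
    have h4 : (1:ℝ) < |(a:ℝ)| / M := (one_lt_div hM0).mpr ha
    push_cast [hN]; linarith
  obtain ⟨n, hn⟩ : ∃ n : ℤ, n = a.sign * N := ⟨_, rfl⟩
  have hna : (n:ℝ) / a = (N:ℝ) / |(a:ℝ)| := by
    have haz : a ≠ 0 := by exact_mod_cast haR
    rcases lt_or_gt_of_ne haz with h | h
    · rw [hn, Int.sign_eq_neg_one_of_neg h,
        abs_of_neg (by exact_mod_cast h : (a:ℝ) < 0)]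
      push_cast; ring
    · rw [hn, Int.sign_eq_one_of_pos h,
        abs_of_pos (by exact_mod_cast h : (0:ℝ) < (a:ℝ))]
      push_cast; ring
  obtain ⟨u, v, huv⟩ := hco
  obtain ⟨j, hj⟩ : ∃ j : ℤ, j = n * u := ⟨_, rfl⟩
  have hjb : (j:ℝ) * b / a = (n:ℝ)/a - (n * v : ℤ) := by
    have hz : j * b = n - n * v * a := by
      have h1 : u * b = 1 - v * a := by linarith [huv]
      calc j * b = n * (u * b) := by rw [hj]; ring
        _ = n * (1 - v * a) := by rw [h1]
        _ = n - n * v * a := by ring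
    have h2 : (j:ℝ) * b = (n:ℝ) - (n*v:ℤ) * a := by exact_mod_cast congrArg (Int.cast : ℤ → ℝ) hz
    rw [h2]; push_cast; field_simp
  refine ⟨t₀ + j / a, j, -(n * v), ?_, ?_⟩
  · have h1 : (t₀ + (j:ℝ)/a) * a + P₁ - j = u₁ + 1/(2*M) := by
      rw [ht₀]; field_simp; ring
    rw [h1]
    constructor
    · have : (0:ℝ) < 1/(2*M) := by positivity
      linarith
    · have : (1:ℝ)/(2*M) < 1/M := by
        rw [div_lt_div_iff₀ (by positivity) hM0]; nlinarith
      linarith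
  · have h1 : (t₀ + (j:ℝ)/a) * b + P₂ - ((-(n*v):ℤ):ℝ) = s + (N:ℝ)/|(a:ℝ)| := by
      have he : (t₀ + (j:ℝ)/a) * b = t₀ * b + (j:ℝ)*b/a := by ring
      rw [he, hjb, hna, hs]; push_cast; ring
    rw [h1]
    have hu₂ : u₂ = s + L := by rw [hL]; ring
    exact ⟨by linarith, by linarith⟩


lemma digit_sum_summable (M : ℕ) (hM : 2 ≤ M) (f : ℕ → ℕ) (hf : ∀ j, f j < M) :
    Summable (fun j : ℕ => (f j : ℝ) / (M:ℝ) ^ (j+1)) := by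
  have hM1 : (1:ℝ) < M := by exact_mod_cast lt_of_lt_of_le one_lt_two hM
  have hg : Summable (fun j : ℕ => (M:ℝ) * ((M:ℝ)⁻¹) ^ (j+1)) := by
    apply Summable.mul_left
    exact (summable_geometric_of_lt_one (by positivity) (by
      rw [inv_lt_one_iff₀]; right; exact hM1)).comp_injective (add_left_injective 1)
  refine Summable.of_nonneg_of_le (fun j => by positivity) (fun j => ?_) hg
  rw [div_eq_mul_inv, ← inv_pow]
  have : (f j : ℝ) ≤ M := le_of_lt (by exact_mod_cast hf j)
  exact mul_le_mul_of_nonneg_right this (by positivity)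

lemma digit_forced (M : ℕ) (hM : 2 ≤ M) (f : ℕ → ℕ) (hf : ∀ j, f j < M)
    (c : ℕ) (hc : c < M) (r : ℝ) (hr : r ∈ Set.Ioo ((c:ℝ)/M) ((c:ℝ)/M + 1/M))
    (hqr : ((∑' j : ℕ, (f j : ℝ) / (M:ℝ) ^ (j+1) : ℝ) : AddCircle (1:ℝ)) = (r : AddCircle (1:ℝ))) :
    f 0 = c := by
  have hM0 : (0:ℝ) < M := by positivity
  have hM1 : (1:ℝ) < M := by exact_mod_cast lt_of_lt_of_le one_lt_two hM
  have hinv : (M:ℝ)⁻¹ < 1 := by rw [inv_lt_one_iff₀]; right; exact hM1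
  have hgeo : ∑' j:ℕ, ((M:ℝ)⁻¹)^j = (M:ℝ) / ((M:ℝ) - 1) := by
    rw [tsum_geometric_of_lt_one (by positivity) hinv]
    have h1 : (1:ℝ) - (M:ℝ)⁻¹ = ((M:ℝ) - 1)/M := by field_simp
    rw [h1, inv_div]
  have hsum := digit_sum_summable M hM f hf
  set x : ℝ := ∑' j : ℕ, (f j : ℝ) / (M:ℝ) ^ (j+1) with hxdef
  have hx0 : 0 ≤ x := tsum_nonneg (fun j => by positivity)
  have hgsum : Summable (fun j : ℕ => (((M:ℝ)-1)/M) * ((M:ℝ)⁻¹)^j) :=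
    (summable_geometric_of_lt_one (by positivity) hinv).mul_left _
  have hbound : ∀ j : ℕ, (f j : ℝ) / (M:ℝ) ^ (j+1) ≤ (((M:ℝ)-1)/M) * ((M:ℝ)⁻¹)^j := by
    intro j
    have h1 : (f j : ℝ) ≤ (M:ℝ) - 1 := by
      have : (f j : ℝ) + 1 ≤ M := by exact_mod_cast hf j
      linarith
    rw [div_eq_mul_inv, ← inv_pow, pow_succ, div_eq_mul_inv]
    calc (f j : ℝ) * ((M:ℝ)⁻¹^j * (M:ℝ)⁻¹) ≤ ((M:ℝ)-1) * ((M:ℝ)⁻¹^j * (M:ℝ)⁻¹) := by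
          apply mul_le_mul_of_nonneg_right h1 (by positivity)
      _ = ((M:ℝ)-1) * (M:ℝ)⁻¹ * (M:ℝ)⁻¹^j := by ring
  have hx1 : x ≤ 1 := by
    have h2 : x ≤ ∑' j : ℕ, (((M:ℝ)-1)/M) * ((M:ℝ)⁻¹)^j := Summable.tsum_le_tsum hbound hsum hgsum
    rw [tsum_mul_left, hgeo] at h2
    have h3 : (((M:ℝ)-1)/M) * ((M:ℝ)/((M:ℝ)-1)) = 1 := by
      have hne1 : (M:ℝ) - 1 ≠ 0 := by linarith
      field_simp
    linarith [h2, h3.symm ▸ h2]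
  -- x = r
  have hrange : r ∈ Set.Ioo (0:ℝ) 1 := by
    obtain ⟨h1, h2⟩ := hr
    constructor
    · have : (0:ℝ) ≤ (c:ℝ)/M := by positivity
      linarith
    · have hcm : (c:ℝ) + 1 ≤ M := by exact_mod_cast hc
      have : (c:ℝ)/M + 1/M ≤ 1 := by
        rw [← add_div, div_le_one hM0]; linarith
      linarith
  have hxr : x = r := by
    rw [QuotientAddGroup.eq_iff_sub_mem] at hqr
    obtain ⟨k, hk⟩ := AddSubgroup.mem_zmultiples_iff.mp hqr
    have hk' : (k:ℝ) = x - r := by simpa using hk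
    have hk0 : k = 0 := by
      have h1 : (k:ℝ) < 1 := by rw [hk']; obtain ⟨a1, a2⟩ := hrange; linarith
      have h2 : (-1:ℝ) < k := by rw [hk']; obtain ⟨a1, a2⟩ := hrange; linarith
      have ha : k < 1 := by exact_mod_cast h1
      have hb : -1 < k := by exact_mod_cast h2
      omega
    rw [hk0] at hk'; simp at hk'; linarith [hk'.symm]
  -- split off first digit
  have hsplit : x = (f 0 : ℝ)/M + ∑' j : ℕ, (f (j+1) : ℝ) / (M:ℝ)^(j+2) := by
    rw [hxdef, Summable.tsum_eq_zero_add hsum]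
    norm_num
  set R : ℝ := ∑' j : ℕ, (f (j+1) : ℝ) / (M:ℝ)^(j+2) with hRdef
  have hshiftsum : Summable (fun j : ℕ => (f (j+1) : ℝ) / (M:ℝ)^(j+2)) := by
    have := hsum.comp_injective (add_left_injective 1)
    exact this
  have hR0 : 0 ≤ R := tsum_nonneg (fun j => by positivity)
  have hR1 : R ≤ 1/M := by
    have hg2 : Summable (fun j : ℕ => (((M:ℝ)-1)/M^2) * ((M:ℝ)⁻¹)^j) :=
      (summable_geometric_of_lt_one (by positivity) hinv).mul_left _
    have hb2 : ∀ j : ℕ, (f (j+1) : ℝ) / (M:ℝ)^(j+2) ≤ (((M:ℝ)-1)/M^2) * ((M:ℝ)⁻¹)^j := by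
      intro j
      have h1 : (f (j+1) : ℝ) ≤ (M:ℝ) - 1 := by
        have : (f (j+1) : ℝ) + 1 ≤ M := by exact_mod_cast hf (j+1)
        linarith
      have h2 : (M:ℝ)^(j+2) = (M:ℝ)^j * M^2 := by ring
      rw [h2, div_eq_mul_inv, mul_inv, ← inv_pow]
      calc (f (j+1) : ℝ) * (((M:ℝ)⁻¹)^j * ((M:ℝ)^2)⁻¹)
          ≤ ((M:ℝ)-1) * (((M:ℝ)⁻¹)^j * ((M:ℝ)^2)⁻¹) := by
            apply mul_le_mul_of_nonneg_right h1 (by positivity)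
        _ = (((M:ℝ)-1) * ((M:ℝ)^2)⁻¹) * ((M:ℝ)⁻¹)^j := by ring
        _ = (((M:ℝ)-1)/M^2) * ((M:ℝ)⁻¹)^j := by rw [div_eq_mul_inv]
    have h2 : R ≤ ∑' j : ℕ, (((M:ℝ)-1)/M^2) * ((M:ℝ)⁻¹)^j := Summable.tsum_le_tsum hb2 hshiftsum hg2
    rw [tsum_mul_left, hgeo] at h2
    have h3 : (((M:ℝ)-1)/M^2) * ((M:ℝ)/((M:ℝ)-1)) = 1/M := by
      have : (M:ℝ) - 1 ≠ 0 := by linarith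
      field_simp
    linarith [h3 ▸ h2]
  -- conclude
  obtain ⟨hr1, hr2⟩ := hr
  rw [← hxr] at hr1 hr2
  rw [hsplit] at hr1 hr2
  have key1 : (f 0 : ℝ) < (c:ℝ) + 1 := by
    have h1 : (f 0 : ℝ)/M < (c:ℝ)/M + 1/M := by linarith
    rw [← add_div] at h1
    have := (div_lt_div_iff_of_pos_right hM0).mp h1
    linarith [this]
  have key2 : (c:ℝ) < (f 0 : ℝ) + 1 := by
    have h1 : (c:ℝ)/M < (f 0 : ℝ)/M + 1/M := by linarith
    rw [← add_div] at h1
    have := (div_lt_div_iff_of_pos_right hM0).mp h1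
    linarith [this]
  have k1 : f 0 < c + 1 := by exact_mod_cast key1
  have k2 : c < f 0 + 1 := by exact_mod_cast key2
  omega



noncomputable section

/-- The two-dimensional torus `𝕋² = (ℝ/ℤ)²`. -/
abbrev T2 := AddCircle (1 : ℝ) × AddCircle (1 : ℝ)

/-- The geodesic line (coset) `ℝv + p ⊆ 𝕋²`. -/
def lineT2 (v : ℝ × ℝ) (p : T2) : Set T2 :=
  {q | ∃ t : ℝ, q = (((t * v.1 : ℝ) : AddCircle (1 : ℝ)) + p.1,
                     ((t * v.2 : ℝ) : AddCircle (1 : ℝ)) + p.2)}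

/-- The limiting Cantor set in `𝕋²` generated by the alphabet `A ⊆ ℤ_M²`. -/
def cantorSet2 (M : ℕ) (A : Set (ZMod M × ZMod M)) : Set T2 :=
  {p | ∃ d : ℕ → ZMod M × ZMod M, (∀ j, d j ∈ A) ∧
    p = (((∑' j : ℕ, ((d j).1.val : ℝ) / (M : ℝ) ^ (j + 1) : ℝ) : AddCircle (1 : ℝ)),
         ((∑' j : ℕ, ((d j).2.val : ℝ) / (M : ℝ) ^ (j + 1) : ℝ) : AddCircle (1 : ℝ)))}

/-- If `a, b` are coprime integers (not both zero) with `max(|a|, |b|) > M`, then no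
line in direction `(a, b)` is contained in the limiting Cantor set of an alphabet
`𝒜 ⊊ ℤ_M²`. -/
theorem no_line_of_large_slope (M : ℕ) (hM : 2 ≤ M)
    (A : Set (ZMod M × ZMod M)) (hAne : A.Nonempty) (hAproper : A ≠ Set.univ)
    (a b : ℤ) (hab : Int.gcd a b = 1) (hne : ¬(a = 0 ∧ b = 0))
    (hbig : M < max a.natAbs b.natAbs) :
    ¬ ∃ p : T2, lineT2 ((a : ℝ), (b : ℝ)) p ⊆ cantorSet2 M A := by
  haveI : NeZero M := ⟨by omega⟩
  rintro ⟨p, hline⟩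
  obtain ⟨z, hz⟩ := (Set.ne_univ_iff_exists_notMem A).mp hAproper
  obtain ⟨P₁, hP₁⟩ : ∃ x : ℝ, (x : AddCircle (1:ℝ)) = p.1 :=
    QuotientAddGroup.mk'_surjective _ p.1
  obtain ⟨P₂, hP₂⟩ : ∃ x : ℝ, (x : AddCircle (1:ℝ)) = p.2 :=
    QuotientAddGroup.mk'_surjective _ p.2
  have hc : z.1.val < M := ZMod.val_lt z.1
  have hd : z.2.val < M := ZMod.val_lt z.2
  have hco : IsCoprime a b := Int.isCoprime_iff_gcd_eq_one.mpr hab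
  obtain ⟨t, k₁, k₂, h1, h2⟩ :
      ∃ t : ℝ, ∃ k₁ k₂ : ℤ,
        (t*a + P₁ - k₁) ∈ Set.Ioo ((z.1.val:ℝ)/M) ((z.1.val:ℝ)/M + 1/M) ∧
        (t*b + P₂ - k₂) ∈ Set.Ioo ((z.2.val:ℝ)/M) ((z.2.val:ℝ)/M + 1/M) := by
    rcases lt_max_iff.mp hbig with h | h
    · have ha' : (M:ℝ) < |(a:ℝ)| := by
        have h2 : ((M:ℤ)) < |a| := by rw [Int.abs_eq_natAbs]; exact_mod_cast h
        exact_mod_cast h2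
      exact key_hit M hM a b hco.symm ha' P₁ P₂ _ _
    · have hb' : (M:ℝ) < |(b:ℝ)| := by
        have h2 : ((M:ℤ)) < |b| := by rw [Int.abs_eq_natAbs]; exact_mod_cast h
        exact_mod_cast h2
      obtain ⟨t, k₂', k₁', hB, hA⟩ := key_hit M hM b a hco hb' P₂ P₁ _ _
      exact ⟨t, k₁', k₂', hA, hB⟩
  set r₁ : ℝ := t*a + P₁ - k₁ with hr₁
  set r₂ : ℝ := t*b + P₂ - k₂ with hr₂
  have hq : (((r₁ : ℝ) : AddCircle (1:ℝ)), ((r₂ : ℝ) : AddCircle (1:ℝ))) ∈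
      lineT2 ((a : ℝ), (b : ℝ)) p := by
    refine ⟨t, ?_⟩
    have e1 : ((r₁ : ℝ) : AddCircle (1:ℝ)) = ((t * (a:ℝ) : ℝ) : AddCircle (1:ℝ)) + p.1 := by
      rw [← hP₁, ← QuotientAddGroup.mk_add, QuotientAddGroup.eq_iff_sub_mem]
      exact AddSubgroup.mem_zmultiples_iff.mpr ⟨-k₁, by rw [zsmul_eq_mul]; push_cast; ring⟩
    have e2 : ((r₂ : ℝ) : AddCircle (1:ℝ)) = ((t * (b:ℝ) : ℝ) : AddCircle (1:ℝ)) + p.2 := by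
      rw [← hP₂, ← QuotientAddGroup.mk_add, QuotientAddGroup.eq_iff_sub_mem]
      exact AddSubgroup.mem_zmultiples_iff.mpr ⟨-k₂, by rw [zsmul_eq_mul]; push_cast; ring⟩
    exact Prod.ext e1 e2
  obtain ⟨dig, hdig, heq⟩ := hline hq
  rw [Prod.mk.injEq] at heq
  obtain ⟨heq1, heq2⟩ := heq
  have hf1 : ∀ j, (dig j).1.val < M := fun j => ZMod.val_lt _
  have hf2 : ∀ j, (dig j).2.val < M := fun j => ZMod.val_lt _
  have hd01 : (dig 0).1.val = z.1.val :=
    digit_forced M hM (fun j => (dig j).1.val) hf1 z.1.val hc r₁ h1 heq1.symm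
  have hd02 : (dig 0).2.val = z.2.val :=
    digit_forced M hM (fun j => (dig j).2.val) hf2 z.2.val hd r₂ h2 heq2.symm
  have : dig 0 = z := Prod.ext (ZMod.val_injective M hd01) (ZMod.val_injective M hd02)
  exact hz (this ▸ hdig 0)
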